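/- Let c ∈ [0,∞)^W be irreducible. Then the system of equations Σ_{σ'≠σ} c(σ,σ') z_{σ'}/z_σ = Σ_{σ'≠σ} c(σ',σ) z_σ/z_{σ'} (for every σ ∈ Γ) has a unique solution z̃ in the normalized set 𝒜 = {z ∈ (0,∞)^Γ : Σ_σ z_σ² = 1}, and the set of maximum points over (0,∞)^Γ of the function z ↦ Σ_{(σ,σ')∈W} c(σ,σ')(1 − z_{σ'}/z_σ) is exactly the ray {t·z̃ : t > 0}. -/

import Mathlib

open Finset

/-- `c ∈ [0,∞)^W` is irreducible: for any `σ ≠ σ'` there is a finite chain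
`σ₁ = σ, …, σ_n = σ'` with `c(σ_i, σ_{i+1}) > 0` for all `i`. -/
def IrreducibleRates {Γ : Type*} (c : Γ → Γ → ℝ) : Prop :=
  ∀ σ σ' : Γ, σ ≠ σ' → Relation.TransGen (fun a b => 0 < c a b) σ σ'

/-- `Ĵ(c,z) = Σ_{(σ,σ')∈W} c(σ,σ')(1 − z_{σ'}/z_σ)`. -/
noncomputable def Jhat {Γ : Type*} [Fintype Γ] [DecidableEq Γ]
    (c : Γ → Γ → ℝ) (z : Γ → ℝ) : ℝ :=
  ∑ p ∈ Finset.univ.filter (fun p : Γ × Γ => p.1 ≠ p.2), c p.1 p.2 * (1 - z p.2 / z p.1)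

/-- The stationarity system (frignotta):
`Σ_{σ'≠σ} c(σ,σ') z_{σ'}/z_σ = Σ_{σ'≠σ} c(σ',σ) z_σ/z_{σ'}` for every `σ`. -/
def StationarySystem {Γ : Type*} [Fintype Γ] [DecidableEq Γ]
    (c : Γ → Γ → ℝ) (z : Γ → ℝ) : Prop :=
  ∀ σ : Γ, ∑ σ' ∈ Finset.univ.filter (· ≠ σ), c σ σ' * (z σ' / z σ)
      = ∑ σ' ∈ Finset.univ.filter (· ≠ σ), c σ' σ * (z σ / z σ')

section AuxStmt2
open Real

variable {Γ : Type*} [Fintype Γ] [DecidableEq Γ]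

noncomputable def Fc (c : Γ → Γ → ℝ) (z : Γ → ℝ) : ℝ :=
  ∑ p ∈ Finset.univ.filter (fun p : Γ × Γ => p.1 ≠ p.2), c p.1 p.2 * (z p.2 / z p.1)

lemma sum_W_fst (f : Γ × Γ → ℝ) :
    ∑ p ∈ Finset.univ.filter (fun p : Γ × Γ => p.1 ≠ p.2), f p
      = ∑ a, ∑ b ∈ Finset.univ.filter (· ≠ a), f (a, b) := by
  rw [Finset.sum_filter, Fintype.sum_prod_type]
  refine Finset.sum_congr rfl fun a _ => ?_
  rw [Finset.sum_filter]
  refine Finset.sum_congr rfl fun b _ => ?_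
  by_cases h : a = b <;> simp [h, Ne.symm, eq_comm]

lemma sum_W_snd (f : Γ × Γ → ℝ) :
    ∑ p ∈ Finset.univ.filter (fun p : Γ × Γ => p.1 ≠ p.2), f p
      = ∑ a, ∑ b ∈ Finset.univ.filter (· ≠ a), f (b, a) := by
  rw [sum_W_fst]
  rw [Finset.sum_comm' (s := Finset.univ) (t' := Finset.univ)
    (t := fun a => Finset.univ.filter (· ≠ a)) (s' := fun a => Finset.univ.filter (· ≠ a))]
  intro x y
  simp [ne_comm]

lemma jhat_eq (c : Γ → Γ → ℝ) (z : Γ → ℝ) :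
    Jhat c z = (∑ p ∈ Finset.univ.filter (fun p : Γ × Γ => p.1 ≠ p.2), c p.1 p.2) - Fc c z := by
  rw [Jhat, Fc, ← Finset.sum_sub_distrib]
  exact Finset.sum_congr rfl fun p _ => by ring

lemma Fc_scale (c : Γ → Γ → ℝ) (z : Γ → ℝ) {t : ℝ} (ht : t ≠ 0) :
    Fc c (fun σ => t * z σ) = Fc c z := by
  refine Finset.sum_congr rfl fun p _ => ?_
  simp only []
  rw [mul_div_mul_left _ _ ht]

/-- expansion identity -/
lemma Fc_expand (c : Γ → Γ → ℝ) {z w : Γ → ℝ} (hz : ∀ σ, 0 < z σ) (hw : ∀ σ, 0 < w σ) :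
    Fc c w = Fc c z + ∑ p ∈ Finset.univ.filter (fun p : Γ × Γ => p.1 ≠ p.2),
      c p.1 p.2 * (z p.2 / z p.1) *
        (Real.exp (Real.log (w p.2 / z p.2) - Real.log (w p.1 / z p.1)) - 1) := by
  rw [Fc, Fc, ← Finset.sum_add_distrib]
  refine Finset.sum_congr rfl fun p _ => ?_
  have h1 : Real.exp (Real.log (w p.2 / z p.2) - Real.log (w p.1 / z p.1))
      = (w p.2 / z p.2) / (w p.1 / z p.1) := by
    rw [Real.exp_sub, Real.exp_log (div_pos (hw p.2) (hz p.2)), Real.exp_log (div_pos (hw p.1) (hz p.1))]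
  rw [h1]
  have h2 := (hz p.1).ne'
  have h3 := (hz p.2).ne'
  have h4 := (hw p.1).ne'
  field_simp
  ring

/-- the stationary system kills the linear term -/
lemma stat_sum_zero (c : Γ → Γ → ℝ) {z : Γ → ℝ} (hz : StationarySystem c z) (L : Γ → ℝ) :
    ∑ p ∈ Finset.univ.filter (fun p : Γ × Γ => p.1 ≠ p.2),
      c p.1 p.2 * (z p.2 / z p.1) * (L p.2 - L p.1) = 0 := by
  have e1 : ∑ p ∈ Finset.univ.filter (fun p : Γ × Γ => p.1 ≠ p.2),
      c p.1 p.2 * (z p.2 / z p.1) * (L p.2 - L p.1)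
      = ∑ p ∈ Finset.univ.filter (fun p : Γ × Γ => p.1 ≠ p.2),
        c p.1 p.2 * (z p.2 / z p.1) * L p.2
        - ∑ p ∈ Finset.univ.filter (fun p : Γ × Γ => p.1 ≠ p.2),
        c p.1 p.2 * (z p.2 / z p.1) * L p.1 := by
    rw [← Finset.sum_sub_distrib]
    exact Finset.sum_congr rfl fun p _ => by ring
  rw [e1, sum_W_snd (f := fun p => c p.1 p.2 * (z p.2 / z p.1) * L p.2),
    sum_W_fst (f := fun p => c p.1 p.2 * (z p.2 / z p.1) * L p.1)]
  simp only []
  rw [sub_eq_zero]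
  refine Finset.sum_congr rfl fun a _ => ?_
  rw [← Finset.sum_mul, ← Finset.sum_mul, ← hz a]

/-- stationary implies global minimizer of Fc -/
lemma stat_min (c : Γ → Γ → ℝ) (hc : ∀ σ σ' : Γ, σ ≠ σ' → 0 ≤ c σ σ')
    {z : Γ → ℝ} (hz : ∀ σ, 0 < z σ) (hst : StationarySystem c z)
    {w : Γ → ℝ} (hw : ∀ σ, 0 < w σ) : Fc c z ≤ Fc c w := by
  rw [Fc_expand c hz hw]
  have key : ∑ p ∈ Finset.univ.filter (fun p : Γ × Γ => p.1 ≠ p.2),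
      c p.1 p.2 * (z p.2 / z p.1) *
        (Real.exp (Real.log (w p.2 / z p.2) - Real.log (w p.1 / z p.1)) - 1)
      = ∑ p ∈ Finset.univ.filter (fun p : Γ × Γ => p.1 ≠ p.2),
        c p.1 p.2 * (z p.2 / z p.1) *
        (Real.exp (Real.log (w p.2 / z p.2) - Real.log (w p.1 / z p.1)) - 1
          - (Real.log (w p.2 / z p.2) - Real.log (w p.1 / z p.1))) := by
    have := stat_sum_zero c hst (fun τ => Real.log (w τ / z τ))
    rw [← sub_zero (∑ p ∈ _, _ * _ * (_ - 1)), ← this, ← Finset.sum_sub_distrib]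
    exact Finset.sum_congr rfl fun p _ => by ring
  rw [key]
  have h0 : (0:ℝ) ≤ ∑ p ∈ Finset.univ.filter (fun p : Γ × Γ => p.1 ≠ p.2),
      c p.1 p.2 * (z p.2 / z p.1) *
        (Real.exp (Real.log (w p.2 / z p.2) - Real.log (w p.1 / z p.1)) - 1
          - (Real.log (w p.2 / z p.2) - Real.log (w p.1 / z p.1))) := by
    refine Finset.sum_nonneg fun p hp => ?_
    have hp' : p.1 ≠ p.2 := (Finset.mem_filter.mp hp).2
    refine mul_nonneg (mul_nonneg (hc _ _ hp') (div_pos (hz p.2) (hz p.1)).le) ?_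
    have := Real.add_one_le_exp (Real.log (w p.2 / z p.2) - Real.log (w p.1 / z p.1))
    linarith
  linarith

/-- equality case: w proportional to z -/
lemma stat_eq_case (c : Γ → Γ → ℝ) (hcard : 1 < Fintype.card Γ)
    (hc : ∀ σ σ' : Γ, σ ≠ σ' → 0 ≤ c σ σ') (hirr : IrreducibleRates c)
    {z : Γ → ℝ} (hz : ∀ σ, 0 < z σ) (hst : StationarySystem c z)
    {w : Γ → ℝ} (hw : ∀ σ, 0 < w σ) (heq : Fc c w = Fc c z) :
    ∃ t : ℝ, 0 < t ∧ ∀ σ, w σ = t * z σ := by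
  have hE := Fc_expand c hz hw
  rw [heq] at hE
  have hlin := stat_sum_zero c hst (fun τ => Real.log (w τ / z τ))
  have h2 : ∑ p ∈ Finset.univ.filter (fun p : Γ × Γ => p.1 ≠ p.2),
      c p.1 p.2 * (z p.2 / z p.1) *
        (Real.exp (Real.log (w p.2 / z p.2) - Real.log (w p.1 / z p.1)) - 1) = 0 := by
    linarith
  have key : ∑ p ∈ Finset.univ.filter (fun p : Γ × Γ => p.1 ≠ p.2),
        c p.1 p.2 * (z p.2 / z p.1) *
        (Real.exp (Real.log (w p.2 / z p.2) - Real.log (w p.1 / z p.1)) - 1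
          - (Real.log (w p.2 / z p.2) - Real.log (w p.1 / z p.1))) = 0 := by
    calc ∑ p ∈ Finset.univ.filter (fun p : Γ × Γ => p.1 ≠ p.2),
        c p.1 p.2 * (z p.2 / z p.1) *
        (Real.exp (Real.log (w p.2 / z p.2) - Real.log (w p.1 / z p.1)) - 1
          - (Real.log (w p.2 / z p.2) - Real.log (w p.1 / z p.1)))
        = (∑ p ∈ Finset.univ.filter (fun p : Γ × Γ => p.1 ≠ p.2),
            c p.1 p.2 * (z p.2 / z p.1) *
            (Real.exp (Real.log (w p.2 / z p.2) - Real.log (w p.1 / z p.1)) - 1))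
          - ∑ p ∈ Finset.univ.filter (fun p : Γ × Γ => p.1 ≠ p.2),
            c p.1 p.2 * (z p.2 / z p.1) *
            (Real.log (w p.2 / z p.2) - Real.log (w p.1 / z p.1)) := by
          rw [← Finset.sum_sub_distrib]
          exact Finset.sum_congr rfl fun p _ => by ring
      _ = 0 := by rw [h2, hlin, sub_zero]
  have hterm : ∀ p ∈ Finset.univ.filter (fun p : Γ × Γ => p.1 ≠ p.2),
      c p.1 p.2 * (z p.2 / z p.1) *
        (Real.exp (Real.log (w p.2 / z p.2) - Real.log (w p.1 / z p.1)) - 1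
          - (Real.log (w p.2 / z p.2) - Real.log (w p.1 / z p.1))) = 0 := by
    refine (Finset.sum_eq_zero_iff_of_nonneg fun p hp => ?_).mp key
    have hp' : p.1 ≠ p.2 := (Finset.mem_filter.mp hp).2
    refine mul_nonneg (mul_nonneg (hc _ _ hp') (div_pos (hz p.2) (hz p.1)).le) ?_
    have := Real.add_one_le_exp (Real.log (w p.2 / z p.2) - Real.log (w p.1 / z p.1))
    linarith
  have hratio : ∀ a b : Γ, 0 < c a b → w b / z b = w a / z a := by
    intro a b hab
    by_cases h : a = b
    · rw [h]
    · have hT := hterm (a, b) (by simp [h])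
      simp only [] at hT
      have hR : 0 < c a b * (z b / z a) := mul_pos hab (div_pos (hz b) (hz a))
      have h3 : Real.exp (Real.log (w b / z b) - Real.log (w a / z a)) - 1
          - (Real.log (w b / z b) - Real.log (w a / z a)) = 0 := by
        rcases mul_eq_zero.mp hT with h' | h'
        · exact absurd h' hR.ne'
        · exact h'
      have hx0 : Real.log (w b / z b) - Real.log (w a / z a) = 0 := by
        by_contra hne
        have := Real.add_one_lt_exp hne
        linarith
      have hlog : Real.log (w b / z b) = Real.log (w a / z a) := by linarith
      exact Real.log_injOn_pos.eq_iff (Set.mem_Ioi.mpr (div_pos (hw b) (hz b)))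
        (Set.mem_Ioi.mpr (div_pos (hw a) (hz a))) |>.mp hlog
  obtain ⟨σ₀⟩ : Nonempty Γ := Fintype.card_pos_iff.mp (by omega)
  refine ⟨w σ₀ / z σ₀, div_pos (hw σ₀) (hz σ₀), fun σ => ?_⟩
  have hconst : w σ / z σ = w σ₀ / z σ₀ := by
    by_cases h : σ₀ = σ
    · rw [h]
    · have htg := hirr σ₀ σ h
      clear h
      induction htg with
      | single h => exact hratio _ _ h
      | tail _ h ih => exact (hratio _ _ h).trans ih
  rw [← hconst]
  exact (div_mul_cancel₀ _ (hz σ).ne').symm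

lemma firstStep {r : Γ → Γ → Prop} {x y : Γ} (h : Relation.TransGen r x y) :
    x = y ∨ ∃ τ, τ ≠ x ∧ r x τ := by
  refine Relation.TransGen.head_induction_on
    (motive := fun a (_ : Relation.TransGen r a y) => a = y ∨ ∃ τ, τ ≠ a ∧ r a τ) h ?_ ?_
  · intro a h'
    by_cases hay : a = y
    · exact Or.inl hay
    · exact Or.inr ⟨y, fun h'' => hay h''.symm, h'⟩
  · intro a d h' _ IH
    by_cases hda : d = a
    · subst hda
      rcases IH with h'' | ⟨τ, hτ, hr⟩
      · exact Or.inl h''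
      · exact Or.inr ⟨τ, hτ, hr⟩
    · exact Or.inr ⟨d, hda, h'⟩

lemma lastStep {r : Γ → Γ → Prop} {x y : Γ} (h : Relation.TransGen r x y) :
    x = y ∨ ∃ τ, τ ≠ y ∧ r τ y := by
  induction h with
  | single h' =>
    rename_i b
    by_cases hxb : x = b
    · exact Or.inl hxb
    · exact Or.inr ⟨x, hxb, h'⟩
  | tail ht h' IH =>
    rename_i b d
    by_cases hbd : b = d
    · subst hbd
      rcases IH with h'' | ⟨τ, hτ, hr⟩
      · exact Or.inl h''
      · exact Or.inr ⟨τ, hτ, hr⟩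
    · exact Or.inr ⟨b, hbd, h'⟩

lemma exists_out (c : Γ → Γ → ℝ) (hcard : 1 < Fintype.card Γ) (hirr : IrreducibleRates c)
    (σ : Γ) : ∃ τ, τ ≠ σ ∧ 0 < c σ τ := by
  obtain ⟨σ', hσ'⟩ := Fintype.exists_ne_of_one_lt_card hcard σ
  rcases firstStep (hirr σ σ' (Ne.symm hσ')) with h | h
  · exact absurd h (Ne.symm hσ')
  · exact h

lemma exists_in (c : Γ → Γ → ℝ) (hcard : 1 < Fintype.card Γ) (hirr : IrreducibleRates c)
    (σ : Γ) : ∃ τ, τ ≠ σ ∧ 0 < c τ σ := by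
  obtain ⟨σ', hσ'⟩ := Fintype.exists_ne_of_one_lt_card hcard σ
  rcases lastStep (hirr σ' σ hσ') with h | h
  · exact absurd h hσ'
  · exact h

lemma Fc_perturb (c : Γ → Γ → ℝ) {z : Γ → ℝ} (hz : ∀ σ, 0 < z σ) (σ : Γ) {t : ℝ} (ht : 0 < t) :
    Fc c (Function.update z σ (t * z σ))
      = Fc c z + (t⁻¹ - 1) * (∑ σ' ∈ Finset.univ.filter (· ≠ σ), c σ σ' * (z σ' / z σ))
        + (t - 1) * (∑ σ' ∈ Finset.univ.filter (· ≠ σ), c σ' σ * (z σ / z σ')) := by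
  set w := Function.update z σ (t * z σ) with hwdef
  have hwσ : w σ = t * z σ := Function.update_self σ _ z
  have hwb : ∀ b, b ≠ σ → w b = z b := fun b hb => Function.update_of_ne hb _ z
  have key : Fc c w - Fc c z
      = (t⁻¹ - 1) * (∑ σ' ∈ Finset.univ.filter (· ≠ σ), c σ σ' * (z σ' / z σ))
        + (t - 1) * (∑ σ' ∈ Finset.univ.filter (· ≠ σ), c σ' σ * (z σ / z σ')) := by
    have e1 : Fc c w - Fc c z = ∑ p ∈ Finset.univ.filter (fun p : Γ × Γ => p.1 ≠ p.2),
        c p.1 p.2 * (w p.2 / w p.1 - z p.2 / z p.1) := by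
      rw [Fc, Fc, ← Finset.sum_sub_distrib]
      exact Finset.sum_congr rfl fun p _ => by ring
    rw [e1, sum_W_fst (f := fun p => c p.1 p.2 * (w p.2 / w p.1 - z p.2 / z p.1))]
    simp only []
    -- split outer sum at a = σ
    rw [← Finset.add_sum_erase Finset.univ _ (Finset.mem_univ σ), ← Finset.filter_ne' Finset.univ σ]
    have inner1 : ∑ b ∈ Finset.univ.filter (· ≠ σ), c σ b * (w b / w σ - z b / z σ)
        = (t⁻¹ - 1) * (∑ σ' ∈ Finset.univ.filter (· ≠ σ), c σ σ' * (z σ' / z σ)) := by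
      rw [Finset.mul_sum]
      refine Finset.sum_congr rfl fun b hb => ?_
      have hbσ : b ≠ σ := (Finset.mem_filter.mp hb).2
      rw [hwσ, hwb b hbσ]
      have h1 := (hz σ).ne'
      field_simp
    have inner2 : ∑ a ∈ Finset.univ.filter (· ≠ σ),
        (∑ b ∈ Finset.univ.filter (· ≠ a), c a b * (w b / w a - z b / z a))
        = (t - 1) * (∑ σ' ∈ Finset.univ.filter (· ≠ σ), c σ' σ * (z σ / z σ')) := by
      rw [Finset.mul_sum]
      refine Finset.sum_congr rfl fun a ha => ?_
      have haσ : a ≠ σ := (Finset.mem_filter.mp ha).2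
      have hmem : σ ∈ Finset.univ.filter (· ≠ a) := by
        simp [Ne.symm haσ]
      rw [Finset.sum_eq_single_of_mem σ hmem]
      · rw [hwσ, hwb a haσ]
        have h1 := (hz a).ne'
        field_simp
      · intro b hb hbσ
        have hba : b ≠ a := (Finset.mem_filter.mp hb).2
        rw [hwb b hbσ, hwb a haσ, sub_self, mul_zero]
    rw [inner1, inner2]
  linarith

lemma min_stat (c : Γ → Γ → ℝ) (hcard : 1 < Fintype.card Γ)
    (hc : ∀ σ σ' : Γ, σ ≠ σ' → 0 ≤ c σ σ') (hirr : IrreducibleRates c)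
    {z : Γ → ℝ} (hz : ∀ σ, 0 < z σ)
    (hmin : ∀ w : Γ → ℝ, (∀ σ, 0 < w σ) → Fc c z ≤ Fc c w) :
    StationarySystem c z := by
  intro σ
  set A := ∑ σ' ∈ Finset.univ.filter (· ≠ σ), c σ σ' * (z σ' / z σ) with hA
  set B := ∑ σ' ∈ Finset.univ.filter (· ≠ σ), c σ' σ * (z σ / z σ') with hB
  have hApos : 0 < A := by
    obtain ⟨τ, hτ, hcτ⟩ := exists_out c hcard hirr σ
    refine Finset.sum_pos' (fun i hi => ?_) ⟨τ, by simp [hτ], ?_⟩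
    · exact mul_nonneg (hc σ i (Ne.symm (Finset.mem_filter.mp hi).2)) (div_pos (hz i) (hz σ)).le
    · exact mul_pos hcτ (div_pos (hz τ) (hz σ))
  have hBpos : 0 < B := by
    obtain ⟨τ, hτ, hcτ⟩ := exists_in c hcard hirr σ
    refine Finset.sum_pos' (fun i hi => ?_) ⟨τ, by simp [hτ], ?_⟩
    · exact mul_nonneg (hc i σ (Finset.mem_filter.mp hi).2) (div_pos (hz σ) (hz i)).le
    · exact mul_pos hcτ (div_pos (hz σ) (hz τ))
  have hineq : ∀ t : ℝ, 0 < t → 0 ≤ (t⁻¹ - 1) * A + (t - 1) * B := by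
    intro t ht
    have hwpos : ∀ τ, 0 < Function.update z σ (t * z σ) τ := by
      intro τ
      by_cases h : τ = σ
      · subst h; rw [Function.update_self]; exact mul_pos ht (hz τ)
      · rw [Function.update_of_ne h]; exact hz τ
    have := hmin _ hwpos
    rw [Fc_perturb c hz σ ht] at this
    linarith
  -- choose t = √A/√B
  set sa := Real.sqrt A with hsa
  set sb := Real.sqrt B with hsb
  have hsapos : 0 < sa := Real.sqrt_pos.mpr hApos
  have hsbpos : 0 < sb := Real.sqrt_pos.mpr hBpos
  have hA2 : A = sa ^ 2 := (Real.sq_sqrt hApos.le).symm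
  have hB2 : B = sb ^ 2 := (Real.sq_sqrt hBpos.le).symm
  have h := hineq (sa / sb) (div_pos hsapos hsbpos)
  rw [inv_div, hA2, hB2] at h
  have hkey : sa = sb := by
    have h2 : 0 ≤ sb * sa + sa * sb - sa ^ 2 - sb ^ 2 := by
      have e : (sb / sa - 1) * sa ^ 2 + (sa / sb - 1) * sb ^ 2
          = sb * sa + sa * sb - sa ^ 2 - sb ^ 2 := by
        field_simp
        ring
      linarith [e ▸ h]
    nlinarith [sq_nonneg (sa - sb)]
  rw [hA2, hB2, hkey]

lemma chain_bound {r : Γ → Γ → Prop} {x y : Γ} (h : Relation.TransGen r x y) :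
    ∃ n : ℕ, ∀ (w : Γ → ℝ) (K : ℝ), 1 ≤ K → (∀ σ, 0 ≤ w σ) →
      (∀ a b, r a b → w b ≤ K * w a) → w y ≤ K ^ n * w x := by
  induction h with
  | single h' =>
    exact ⟨1, fun w K hK hw hr => by simpa using hr _ _ h'⟩
  | tail ht h' IH =>
    obtain ⟨n, hn⟩ := IH
    refine ⟨n + 1, fun w K hK hw hr => ?_⟩
    calc w _ ≤ K * w _ := hr _ _ h'
      _ ≤ K * (K ^ n * w x) := by
          have := hn w K hK hw hr
          exact mul_le_mul_of_nonneg_left this (by linarith)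
      _ = K ^ (n + 1) * w x := by ring
 
lemma uniform_bound (c : Γ → Γ → ℝ) (hirr : IrreducibleRates c) :
    ∃ N₀ : ℕ, ∀ x y : Γ, x ≠ y → ∀ (w : Γ → ℝ) (K : ℝ), 1 ≤ K → (∀ σ, 0 ≤ w σ) →
      (∀ a b, 0 < c a b → w b ≤ K * w a) → w y ≤ K ^ N₀ * w x := by
  have H : ∀ p : Γ × Γ, ∃ n : ℕ, p.1 ≠ p.2 → ∀ (w : Γ → ℝ) (K : ℝ), 1 ≤ K → (∀ σ, 0 ≤ w σ) →
      (∀ a b, 0 < c a b → w b ≤ K * w a) → w p.2 ≤ K ^ n * w p.1 := by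
    intro p
    by_cases h : p.1 = p.2
    · exact ⟨0, fun h' => absurd h h'⟩
    · obtain ⟨n, hn⟩ := chain_bound (hirr p.1 p.2 h)
      exact ⟨n, fun _ => hn⟩
  choose f hf using H
  refine ⟨Finset.univ.sup f, fun x y hxy w K hK hw hr => ?_⟩
  calc w y ≤ K ^ f (x, y) * w x := hf (x, y) hxy w K hK hw hr
    _ ≤ K ^ Finset.univ.sup f * w x := by
        refine mul_le_mul_of_nonneg_right ?_ (hw x)
        exact pow_le_pow_right₀ hK (Finset.le_sup (Finset.mem_univ (x, y)))

lemma exists_min (c : Γ → Γ → ℝ) (hcard : 1 < Fintype.card Γ)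
    (hc : ∀ σ σ' : Γ, σ ≠ σ' → 0 ≤ c σ σ') (hirr : IrreducibleRates c) :
    ∃ z : Γ → ℝ, (∀ σ, 0 < z σ) ∧ (∑ σ, (z σ) ^ 2 = 1) ∧
      ∀ w : Γ → ℝ, (∀ σ, 0 < w σ) → Fc c z ≤ Fc c w := by
  have hN : (0:ℝ) < Fintype.card Γ := by exact_mod_cast Nat.zero_lt_of_lt hcard
  have hN1 : (1:ℝ) ≤ Fintype.card Γ := by exact_mod_cast Nat.one_le_of_lt hcard
  set N : ℝ := (Fintype.card Γ : ℝ) with hNdef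
  have hsN : 0 < Real.sqrt N := Real.sqrt_pos.mpr hN
  have hsN1 : 1 ≤ Real.sqrt N := Real.one_le_sqrt.mpr hN1
  set z₀ : Γ → ℝ := fun _ => (Real.sqrt N)⁻¹ with hz₀def
  have hz₀pos : ∀ σ, 0 < z₀ σ := fun σ => inv_pos.mpr hsN
  have hz₀sum : ∑ σ, (z₀ σ) ^ 2 = 1 := by
    simp only [hz₀def]
    rw [Finset.sum_const, Finset.card_univ, nsmul_eq_mul]
    rw [inv_pow, Real.sq_sqrt hN.le]
    exact mul_inv_cancel₀ hN.ne'
  set C₀ : ℝ := Fc c z₀ with hC₀def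
  have hC₀eq : C₀ = ∑ p ∈ Finset.univ.filter (fun p : Γ × Γ => p.1 ≠ p.2), c p.1 p.2 := by
    rw [hC₀def, Fc]
    refine Finset.sum_congr rfl fun p _ => ?_
    rw [div_self (inv_pos.mpr hsN).ne', mul_one]
  -- positive edges
  obtain ⟨σ₁⟩ : Nonempty Γ := Fintype.card_pos_iff.mp (by omega)
  obtain ⟨τ₁, hτ₁, hcτ₁⟩ := exists_out c hcard hirr σ₁
  set E : Finset (Γ × Γ) := Finset.univ.filter (fun p : Γ × Γ => p.1 ≠ p.2 ∧ 0 < c p.1 p.2)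
    with hEdef
  have hEne : E.Nonempty := ⟨(σ₁, τ₁), by
    simp only [hEdef, Finset.mem_filter]
    exact ⟨Finset.mem_univ _, Ne.symm hτ₁, hcτ₁⟩⟩
  set cmin : ℝ := E.inf' hEne (fun p : Γ × Γ => c p.1 p.2) with hcmindef
  have hcminpos : 0 < cmin := by
    rw [hcmindef, Finset.lt_inf'_iff]
    intro p hp
    exact ((Finset.mem_filter.mp hp).2).2
  have hcminle : ∀ a b : Γ, a ≠ b → 0 < c a b → cmin ≤ c a b := by
    intro a b hab hpos
    have hmem : ((a, b) : Γ × Γ) ∈ E := by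
      simp only [hEdef, Finset.mem_filter]
      exact ⟨Finset.mem_univ _, hab, hpos⟩
    rw [hcmindef]
    exact Finset.inf'_le _ hmem
  have hC₀pos : 0 < C₀ := by
    rw [hC₀eq]
    refine Finset.sum_pos' (fun p hp => hc _ _ (Finset.mem_filter.mp hp).2) ?_
    exact ⟨(σ₁, τ₁), by simp [Ne.symm hτ₁], hcτ₁⟩
  set K : ℝ := C₀ / cmin with hKdef
  have hK1 : 1 ≤ K := by
    rw [hKdef, le_div_iff₀ hcminpos, one_mul]
    calc cmin ≤ c σ₁ τ₁ := hcminle _ _ (Ne.symm hτ₁) hcτ₁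
      _ ≤ C₀ := by
          rw [hC₀eq]
          refine Finset.single_le_sum (f := fun p : Γ × Γ => c p.1 p.2) (a := ((σ₁, τ₁) : Γ × Γ))
            (fun p hp => hc _ _ (Finset.mem_filter.mp hp).2) ?_
          simp [Ne.symm hτ₁]
  have hKpos : 0 < K := lt_of_lt_of_le one_pos hK1
  obtain ⟨N₀, hN₀⟩ := uniform_bound c hirr
  have hKN₀ : 1 ≤ K ^ N₀ := one_le_pow₀ hK1
  have hnem : Nonempty Γ := ⟨σ₁⟩
  -- edge bound on the sublevel set
  have hedge : ∀ w : Γ → ℝ, (∀ σ, 0 < w σ) → Fc c w ≤ C₀ →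
      ∀ a b, 0 < c a b → w b ≤ K * w a := by
    intro w hw hFw a b hab
    by_cases h : a = b
    · subst h
      nlinarith [hw a, hK1]
    · have hterm : c a b * (w b / w a) ≤ Fc c w := by
        rw [Fc]
        refine Finset.single_le_sum (f := fun p : Γ × Γ => c p.1 p.2 * (w p.2 / w p.1))
          (a := ((a, b) : Γ × Γ))
          (fun p hp => mul_nonneg (hc _ _ (Finset.mem_filter.mp hp).2)
            (div_pos (hw _) (hw _)).le) (by simp [h])
      have h1 : w b / w a ≤ C₀ / c a b := by
        rw [le_div_iff₀ hab]
        calc w b / w a * c a b = c a b * (w b / w a) := by ring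
          _ ≤ C₀ := hterm.trans hFw
      have h2 : C₀ / c a b ≤ C₀ / cmin :=
        div_le_div_of_nonneg_left hC₀pos.le hcminpos (hcminle a b h hab)
      calc w b = w b / w a * w a := (div_mul_cancel₀ _ (hw a).ne').symm
        _ ≤ K * w a := mul_le_mul_of_nonneg_right (h1.trans h2) (hw a).le
  set δ : ℝ := (Real.sqrt N)⁻¹ / K ^ N₀ with hδdef
  have hKN₀pos : (0:ℝ) < K ^ N₀ := lt_of_lt_of_le one_pos hKN₀
  have hδpos : 0 < δ := div_pos (inv_pos.mpr hsN) hKN₀pos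
  have hδle : δ ≤ (Real.sqrt N)⁻¹ := div_le_self (inv_pos.mpr hsN).le hKN₀
  have hlower : ∀ w : Γ → ℝ, (∀ σ, 0 < w σ) → (∑ σ, w σ ^ 2 = 1) → Fc c w ≤ C₀ →
      ∀ σ, δ ≤ w σ ∧ w σ ≤ 1 := by
    intro w hw hsum hFw
    have hub : ∀ σ, w σ ≤ 1 := by
      intro σ
      have h1 : w σ ^ 2 ≤ 1 := by
        rw [← hsum]
        exact Finset.single_le_sum (fun i _ => sq_nonneg (w i)) (Finset.mem_univ σ)
      nlinarith [hw σ]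
    have hmax : ∃ σm, (Real.sqrt N)⁻¹ ≤ w σm := by
      by_contra hcon
      push_neg at hcon
      have hlt : ∑ σ, w σ ^ 2 < ∑ _σ : Γ, ((Real.sqrt N)⁻¹) ^ 2 := by
        refine Finset.sum_lt_sum_of_nonempty Finset.univ_nonempty ?_
        intro i _
        exact pow_lt_pow_left₀ (hcon i) (hw i).le two_ne_zero
      have hone : ∑ _σ : Γ, ((Real.sqrt N)⁻¹) ^ 2 = 1 := by
        rw [Finset.sum_const, Finset.card_univ, nsmul_eq_mul, inv_pow, Real.sq_sqrt hN.le]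
        exact mul_inv_cancel₀ hN.ne'
      rw [hsum, hone] at hlt
      exact lt_irrefl _ hlt
    obtain ⟨σm, hσm⟩ := hmax
    intro σ
    refine ⟨?_, hub σ⟩
    by_cases h : σ = σm
    · subst h
      exact hδle.trans hσm
    · have hbd := hN₀ σ σm h w K hK1 (fun τ => (hw τ).le) (hedge w hw hFw)
      rw [hδdef, div_le_iff₀ hKN₀pos]
      calc (Real.sqrt N)⁻¹ ≤ w σm := hσm
        _ ≤ K ^ N₀ * w σ := hbd
        _ = w σ * K ^ N₀ := mul_comm _ _
  -- compactness
  set S : Set (Γ → ℝ) := (Set.univ.pi fun _ : Γ => Set.Icc δ 1) ∩ {w | ∑ σ, w σ ^ 2 = 1}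
    with hSdef
  have hScomp : IsCompact S := by
    refine (isCompact_univ_pi fun _ => isCompact_Icc).inter_right ?_
    exact isClosed_eq (continuous_finset_sum _ fun σ _ => (continuous_apply σ).pow 2)
      continuous_const
  have hz₀S : z₀ ∈ S := by
    refine ⟨fun σ _ => ⟨hδle, inv_le_one_of_one_le₀ hsN1⟩, hz₀sum⟩
  have hFcont : ContinuousOn (Fc c) S := by
    refine continuousOn_finset_sum _ fun p _ => ?_
    refine continuousOn_const.mul (ContinuousOn.div (continuous_apply p.2).continuousOn
      (continuous_apply p.1).continuousOn fun w hw => ?_)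
    exact (hδpos.trans_le ((hw.1 p.1 (Set.mem_univ _)).1)).ne'
  obtain ⟨zs, hzsS, hzsmin⟩ := hScomp.exists_isMinOn ⟨z₀, hz₀S⟩ hFcont
  have hzspos : ∀ σ, 0 < zs σ := fun σ => hδpos.trans_le ((hzsS.1 σ (Set.mem_univ _)).1)
  have hzssum : ∑ σ, zs σ ^ 2 = 1 := hzsS.2
  refine ⟨zs, hzspos, hzssum, ?_⟩
  intro w hw
  have hs2pos : 0 < ∑ σ, w σ ^ 2 :=
    Finset.sum_pos (fun i _ => pow_pos (hw i) 2) Finset.univ_nonempty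
  set s : ℝ := Real.sqrt (∑ σ, w σ ^ 2) with hs
  have hspos : 0 < s := Real.sqrt_pos.mpr hs2pos
  set w' : Γ → ℝ := fun σ => s⁻¹ * w σ with hw'def
  have hw'pos : ∀ σ, 0 < w' σ := fun σ => mul_pos (inv_pos.mpr hspos) (hw σ)
  have hw'sum : ∑ σ, w' σ ^ 2 = 1 := by
    simp only [hw'def, mul_pow]
    rw [← Finset.mul_sum, inv_pow, hs, Real.sq_sqrt hs2pos.le]
    exact inv_mul_cancel₀ hs2pos.ne'
  have hw'F : Fc c w' = Fc c w := Fc_scale c w (inv_ne_zero hspos.ne')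
  by_cases hcase : Fc c w' ≤ C₀
  · have hmem : w' ∈ S := ⟨fun σ _ => ⟨(hlower w' hw'pos hw'sum hcase σ).1,
      (hlower w' hw'pos hw'sum hcase σ).2⟩, hw'sum⟩
    have := isMinOn_iff.mp hzsmin _ hmem
    rw [hw'F] at this
    exact this
  · push_neg at hcase
    have h1 : Fc c zs ≤ C₀ := isMinOn_iff.mp hzsmin _ hz₀S
    linarith


end AuxStmt2

/-- for irreducible `c`, the stationarity system has a unique solution `z̃` in
`𝒜 = {z ∈ (0,∞)^Γ : Σ z_σ² = 1}`, and the set of maximum points over `(0,∞)^Γ` of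
`z ↦ Ĵ(c,z)` is exactly the ray `{t·z̃ : t > 0}`. -/
theorem stmt2 {Γ : Type*} [Fintype Γ] [DecidableEq Γ] (hcard : 1 < Fintype.card Γ)
    (c : Γ → Γ → ℝ) (hc : ∀ σ σ' : Γ, σ ≠ σ' → 0 ≤ c σ σ') (hirr : IrreducibleRates c) :
    ∃ ztilde : Γ → ℝ,
      ((∀ σ, 0 < ztilde σ) ∧ (∑ σ, (ztilde σ) ^ 2 = 1) ∧ StationarySystem c ztilde) ∧
      (∀ z : Γ → ℝ, (∀ σ, 0 < z σ) → (∑ σ, (z σ) ^ 2 = 1) → StationarySystem c z →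
        z = ztilde) ∧
      (∀ z : Γ → ℝ, (∀ σ, 0 < z σ) →
        ((∀ w : Γ → ℝ, (∀ σ, 0 < w σ) → Jhat c w ≤ Jhat c z) ↔
          ∃ t : ℝ, 0 < t ∧ z = fun σ => t * ztilde σ)) := by
  obtain ⟨zt, hztpos, hztsum, hztmin⟩ := exists_min c hcard hc hirr
  have hztstat : StationarySystem c zt := min_stat c hcard hc hirr hztpos hztmin
  refine ⟨zt, ⟨hztpos, hztsum, hztstat⟩, ?_, ?_⟩
  · intro z hzpos hzsum hzstat
    have hzmin : ∀ w : Γ → ℝ, (∀ σ, 0 < w σ) → Fc c z ≤ Fc c w :=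
      fun w hw => stat_min c hc hzpos hzstat hw
    have heq : Fc c z = Fc c zt := le_antisymm (hzmin zt hztpos) (hztmin z hzpos)
    obtain ⟨t, ht, hzt⟩ := stat_eq_case c hcard hc hirr hztpos hztstat hzpos heq
    have ht2 : t ^ 2 = 1 := by
      have hsum : ∑ σ, (z σ) ^ 2 = t ^ 2 * ∑ σ, (zt σ) ^ 2 := by
        rw [Finset.mul_sum]
        exact Finset.sum_congr rfl fun σ _ => by rw [hzt σ]; ring
      rw [hzsum, hztsum, mul_one] at hsum
      exact hsum.symm
    have ht1 : t = 1 := by nlinarith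
    funext σ
    rw [hzt σ, ht1, one_mul]
  · intro z hzpos
    constructor
    · intro hmax
      have hzmin : ∀ w : Γ → ℝ, (∀ σ, 0 < w σ) → Fc c z ≤ Fc c w := by
        intro w hw
        have := hmax w hw
        rw [jhat_eq, jhat_eq] at this
        linarith
      have heq : Fc c z = Fc c zt := le_antisymm (hzmin zt hztpos) (hztmin z hzpos)
      obtain ⟨t, ht, hzt⟩ := stat_eq_case c hcard hc hirr hztpos hztstat hzpos heq
      exact ⟨t, ht, funext hzt⟩
    · rintro ⟨t, ht, rfl⟩ w hw
      rw [jhat_eq, jhat_eq]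
      have h1 : Fc c (fun σ => t * zt σ) = Fc c zt := Fc_scale c zt ht.ne'
      have h2 : Fc c zt ≤ Fc c w := hztmin w hw
      linarith
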